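/- Let H be a Hopf algebra over a field, K ⊆ H a subcoalgebra containing 1, and C a left H-module coalgebra such that the H-action is compatible with the comultiplication: Δ(h·x) = (Δh)·(Δx). If C_0 ⊆ C_1 ⊆ … denotes the coradical filtration of C and C is connected with C_0 = k·ε stable under K, then K·C_l ⊆ C_l for all l ≥ 0. -/

import Mathlib

open TensorProduct

/-- A submodule `V` of a coalgebra `C` is a subcoalgebra if `Δ(V) ⊆ V ⊗ V`. -/
def IsSubcoalgebra (k : Type*) {C : Type*} [CommRing k] [AddCommGroup C] [Module k C]
    [Coalgebra k C] (V : Submodule k C) : Prop :=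
  ∀ x ∈ V, Coalgebra.comul (R := k) x ∈
    LinearMap.range (TensorProduct.map V.subtype V.subtype)

/-- The coradical of a coalgebra: the sum of all simple subcoalgebras. -/
noncomputable def coradical (k C : Type*) [CommRing k] [AddCommGroup C] [Module k C]
    [Coalgebra k C] : Submodule k C :=
  sSup {V : Submodule k C | IsSubcoalgebra k V ∧ V ≠ ⊥ ∧
    ∀ W ≤ V, IsSubcoalgebra k W → W = ⊥ ∨ W = V}

/-- The coradical filtration: `C_0` is the coradical and
`C_{n+1} = Δ⁻¹(C_0 ⊗ C + C ⊗ C_n)`. -/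
noncomputable def coradFil (k C : Type*) [CommRing k] [AddCommGroup C] [Module k C]
    [Coalgebra k C] : ℕ → Submodule k C
  | 0 => coradical k C
  | n + 1 =>
      Submodule.comap (Coalgebra.comul (R := k))
        (LinearMap.range (TensorProduct.map (coradical k C).subtype
            (LinearMap.id : C →ₗ[k] C)) ⊔
          LinearMap.range (TensorProduct.map (LinearMap.id : C →ₗ[k] C)
            (coradFil k C n).subtype))

section Aux
variable {k H C : Type*} [Field k] [Ring H] [HopfAlgebra k H]
    [AddCommGroup C] [Module k C] [Coalgebra k C]
    [Module H C] [IsScalarTower k H C]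

/-- The action of `H` on `C` as a `k`-bilinear map. -/
noncomputable def actL : H →ₗ[k] C →ₗ[k] C where
  toFun h :=
    { toFun := fun x => h • x
      map_add' := smul_add h
      map_smul' := fun c x => smul_comm h c x }
  map_add' := fun a b => LinearMap.ext fun x => add_smul a b x
  map_smul' := fun c a => LinearMap.ext fun x => smul_assoc c a x

@[simp] lemma actL_apply (h : H) (x : C) : actL (k := k) h x = h • x := rfl

/-- The diagonal action of `H ⊗ H` on `C ⊗ C` as a `k`-linear map. -/
noncomputable def Tmap : (H ⊗[k] H) →ₗ[k] (C ⊗[k] C) →ₗ[k] (C ⊗[k] C) :=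
  TensorProduct.lift
    (((TensorProduct.mapBilinear (RingHom.id k) C C C C).comp (actL (k := k))).compl₂ (actL (k := k)))

@[simp] lemma Tmap_tmul (a b : H) (u v : C) :
    Tmap (a ⊗ₜ[k] b) (u ⊗ₜ[k] v) = (a • u) ⊗ₜ[k] (b • v) := rfl

end Aux

/-- For a subcoalgebra `K ∋ 1` of a Hopf algebra `H` acting on a
connected left `H`-module coalgebra `C` compatibly with the comultiplication
(`Δ(h·x) = Δh · Δx`), with `C_0` stable under `K`, each term `C_l` of the
coradical filtration is stable under `K`. -/
theorem stmt_6 {k H C : Type*} [Field k] [Ring H] [HopfAlgebra k H]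
    [AddCommGroup C] [Module k C] [Coalgebra k C]
    [Module H C] [IsScalarTower k H C]
    (hcompat : ∀ (h : H) (x : C), ∃ (n m : ℕ) (h1 h2 : Fin n → H) (x1 x2 : Fin m → C),
      Coalgebra.comul (R := k) h = ∑ i, h1 i ⊗ₜ[k] h2 i ∧
      Coalgebra.comul (R := k) x = ∑ j, x1 j ⊗ₜ[k] x2 j ∧
      Coalgebra.comul (R := k) (h • x) = ∑ i, ∑ j, (h1 i • x1 j) ⊗ₜ[k] (h2 i • x2 j))
    (K : Submodule k H) (h1K : (1 : H) ∈ K)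
    (hKsub : IsSubcoalgebra k K)
    (e : C) (hge : Coalgebra.comul (R := k) e = e ⊗ₜ[k] e)
    (hce : Coalgebra.counit (R := k) e = 1) (he0 : e ≠ 0)
    (hconn : coradical k C = Submodule.span k {e})
    (hstab : ∀ h ∈ K, ∀ x ∈ coradFil k C 0, h • x ∈ coradFil k C 0)
    (l : ℕ) :
    ∀ h ∈ K, ∀ x ∈ coradFil k C l, h • x ∈ coradFil k C l := by

  -- comul of a smul is `Tmap` applied to the comuls
  have key : ∀ (h : H) (x : C),
      Coalgebra.comul (R := k) (h • x) =
        Tmap (Coalgebra.comul (R := k) h) (Coalgebra.comul (R := k) x) := by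
    intro h x
    obtain ⟨n, m, h1, h2, x1, x2, hh, hx, hhx⟩ := hcompat h x
    rw [hhx, hh, hx]
    simp only [map_sum, LinearMap.sum_apply, Tmap_tmul]
    rw [Finset.sum_comm]
  induction l with
  | zero => exact hstab
  | succ n ih =>
    intro h hh x hx
    rw [coradFil, Submodule.mem_comap] at hx
    set S : Submodule k (C ⊗[k] C) :=
      LinearMap.range (TensorProduct.map (coradical k C).subtype
          (LinearMap.id : C →ₗ[k] C)) ⊔
        LinearMap.range (TensorProduct.map (LinearMap.id : C →ₗ[k] C)
          (coradFil k C n).subtype) with hS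
    have hx' : Coalgebra.comul (R := k) x ∈ S := hx
    have main : ∀ w : (↥K) ⊗[k] (↥K), ∀ s ∈ S,
        Tmap (TensorProduct.map K.subtype K.subtype w) s ∈ S := by
      intro w
      induction w using TensorProduct.induction_on with
      | zero => intro s hs; simp
      | add w₁ w₂ ih₁ ih₂ =>
        intro s hs
        simp only [map_add, LinearMap.add_apply]
        exact add_mem (ih₁ s hs) (ih₂ s hs)
      | tmul a b =>
        intro s hs
        rw [hS] at hs
        obtain ⟨u, hu, v, hv, rfl⟩ := Submodule.mem_sup.mp hs
        clear hs
        rw [map_add]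
        refine add_mem ?_ ?_
        · obtain ⟨u', rfl⟩ := hu
          refine Submodule.mem_sup_left ?_
          induction u' using TensorProduct.induction_on with
          | zero => simp
          | add p q ihp ihq =>
            rw [map_add, map_add]; exact add_mem ihp ihq
          | tmul c y =>
            have hc : (a : H) • (c : C) ∈ coradical k C := hstab a a.2 c c.2
            exact ⟨⟨(a : H) • (c : C), hc⟩ ⊗ₜ[k] ((b : H) • y), by simp⟩
        · obtain ⟨v', rfl⟩ := hv
          refine Submodule.mem_sup_right ?_
          induction v' using TensorProduct.induction_on with
          | zero => simp
          | add p q ihp ihq =>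
            rw [map_add, map_add]; exact add_mem ihp ihq
          | tmul y c =>
            have hc : (b : H) • (c : C) ∈ coradFil k C n := ih b b.2 c c.2
            exact ⟨((a : H) • y) ⊗ₜ[k] ⟨(b : H) • (c : C), hc⟩, by simp⟩
    obtain ⟨w, hw⟩ := hKsub h hh
    rw [coradFil, Submodule.mem_comap]
    rw [key, ← hw]
    exact main w _ hx'
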